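/- Let G be a finite group acting on a commutative ring R and let I ⊆ R be a G-stable ideal. Then for every x ∈ I, the element x^{|G|} lies in the ideal of R generated by I^G = I ∩ R^G, where R^G denotes the subring of G-invariants. -/
import Mathlib

open Polynomial

/-- If `G` is a finite group acting on a commutative ring `R` and `I ⊆ R` is a
`G`-stable ideal, then for every `x ∈ I` the element `x^{|G|}` lies in the ideal of
`R` generated by `I^G = I ∩ R^G`. -/
theorem pow_card_mem_span_fixed
    {G R : Type*} [Group G] [Fintype G] [CommRing R] [MulSemiringAction G R]
    (I : Ideal R) (hGI : ∀ (σ : G), ∀ x ∈ I, σ • x ∈ I) :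
    ∀ x ∈ I, x ^ (Fintype.card G) ∈
      Ideal.span {r : R | r ∈ I ∧ ∀ σ : G, σ • r = r} := by
  classical
  intro x hx
  set n := Fintype.card G with hn
  set s : Multiset R := Finset.univ.val.map (fun g : G => g • x) with hs
  set p : Polynomial R := (s.map fun t => X - C t).prod with hp
  have hcard : Multiset.card s = n := by simp [hs, hn, Finset.card_univ]
  -- every element of s lies in I
  have hsI : ∀ a ∈ s, a ∈ I := by
    intro a ha
    rw [hs, Multiset.mem_map] at ha
    obtain ⟨g, _, rfl⟩ := ha
    exact hGI g x hx
  -- s is G-invariant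
  have hsmul : ∀ g : G, s.map (fun t => g • t) = s := by
    intro g
    rw [hs, Multiset.map_map]
    have h1 : Multiset.map (⇑(Equiv.mulLeft g)) Finset.univ.val = Finset.univ.val :=
      Multiset.map_univ_val_equiv (Equiv.mulLeft g)
    conv_rhs => rw [← h1, Multiset.map_map]
    apply Multiset.map_congr rfl
    intro h _
    simp [mul_smul]
  -- p is G-invariant
  have hpG : ∀ g : G, g • p = p := by
    intro g
    have : g • p = (s.map fun t => X - C (g • t)).prod := by
      rw [hp]
      rw [show g • (s.map fun t => X - C t).prod
            = (MulSemiringAction.toRingHom G R[X] g) (s.map fun t => X - C t).prod from rfl,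
          map_multiset_prod, Multiset.map_map]
      apply congrArg
      apply Multiset.map_congr rfl
      intro t _
      show g • (X - C t) = X - C (g • t)
      rw [smul_sub, Polynomial.smul_X, Polynomial.smul_C]
    rw [this, hp]
    conv_rhs => rw [← hsmul g, Multiset.map_map]
    rfl
  -- coefficients are fixed
  have hcoeff_fix : ∀ k, ∀ g : G, g • p.coeff k = p.coeff k := by
    intro k g
    rw [← Polynomial.coeff_smul, hpG g]
  -- nonempty submultisets of s have product in I
  have hprodI : ∀ t : Multiset R, t ≤ s → t ≠ 0 → t.prod ∈ I := by
    intro t hts hne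
    obtain ⟨a, ha⟩ := Multiset.exists_mem_of_ne_zero hne
    obtain ⟨t', rfl⟩ := Multiset.exists_cons_of_mem ha
    rw [Multiset.prod_cons]
    exact Ideal.mul_mem_right _ _ (hsI a (Multiset.mem_of_le hts (Multiset.mem_cons_self a t')))
  -- low coefficients lie in I
  have hcoeffI : ∀ k < n, p.coeff k ∈ I := by
    intro k hk
    rw [hp, Multiset.prod_X_sub_C_coeff s (hcard ▸ le_of_lt hk)]
    apply Ideal.mul_mem_left
    have hpos : 0 < Multiset.card s - k := by omega
    unfold Multiset.esymm
    apply multiset_sum_mem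
    intro c hc
    rw [Multiset.mem_map] at hc
    obtain ⟨t, ht, rfl⟩ := hc
    rw [Multiset.mem_powersetCard] at ht
    refine hprodI t ht.1 ?_
    rw [← Multiset.card_pos, ht.2]
    omega
  -- degree bound and top coefficient
  have hdeg : p.natDegree ≤ n := by
    rw [hp]
    refine le_trans (Polynomial.natDegree_multiset_prod_le _) ?_
    have h1 : ∀ d ∈ (Multiset.map (fun t => X - C t) s).map Polynomial.natDegree, d ≤ 1 := by
      intro d hd
      rw [Multiset.map_map, Multiset.mem_map] at hd
      obtain ⟨t, _, rfl⟩ := hd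
      exact Polynomial.natDegree_X_sub_C_le t
    have h2 := Multiset.sum_le_card_nsmul _ 1 h1
    simpa [hcard] using h2
  have htop : p.coeff n = 1 := by
    rw [hp, Multiset.prod_X_sub_C_coeff s hcard.ge]
    simp [hcard, Multiset.esymm]
  -- p.eval x = 0
  have heval : p.eval x = 0 := by
    rw [hp, Polynomial.eval_multiset_prod]
    apply Multiset.prod_eq_zero
    rw [Multiset.map_map, Multiset.mem_map]
    refine ⟨(1 : G) • x, ?_, by simp⟩
    rw [hs, Multiset.mem_map]
    exact ⟨1, Finset.mem_univ_val 1, rfl⟩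
  -- expand eval
  have hsum : (Finset.range n).sum (fun i => p.coeff i * x ^ i) + x ^ n = 0 := by
    have h0 := Polynomial.eval_eq_sum_range' (p := p) (n := n + 1) (Nat.lt_succ_of_le hdeg) x
    rw [heval, Finset.sum_range_succ, htop, one_mul] at h0
    exact h0.symm
  have hxn : x ^ n = - (Finset.range n).sum (fun i => p.coeff i * x ^ i) := by
    rw [eq_neg_iff_add_eq_zero, add_comm]
    exact hsum
  rw [hxn]
  apply neg_mem
  apply Ideal.sum_mem
  intro i hi
  rw [Finset.mem_range] at hi
  apply Ideal.mul_mem_right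
  apply Ideal.subset_span
  exact ⟨hcoeffI i hi, hcoeff_fix i⟩
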